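/- For all natural numbers k and l and all x, z ∈ F: (-1)^l Σ_{j=0}^{l} [l choose j]_q x^{l-j} A*_{k+j}(z) q^{k(l-j)} = (-1)^k Σ_{j=0}^{k} [k choose j]_q x^{k-j} A_{l+j}([1,-z,-x]) q^{(k-j)(k-j-1)/2}. -/

import Mathlib

open Finset

/-- The q-Pochhammer symbol `(a;q)_n = ∏_{j=0}^{n-1} (1 - a q^j)`. -/
def qPoch {F : Type*} [Field F] (q a : F) (n : ℕ) : F :=
  ∏ j ∈ Finset.range n, (1 - a * q ^ j)

/-- The q-binomial coefficient `[n choose i]_q`, equal to 0 when `i > n`. -/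
def qBinom {F : Type*} [Field F] (q : F) (n i : ℕ) : F :=
  if i ≤ n then qPoch q q n / (qPoch q q i * qPoch q q (n - i)) else 0

/-- The q-integer `[n]_q = (1-q^n)/(1-q)`. -/
def qInt {F : Type*} [Field F] (q : F) (n : ℕ) : F := (1 - q ^ n) / (1 - q)

/-- The q-dual sequence `a*_n = ∑_{i=0}^n (-1)^i [n choose i]_q q^{i(i-1)/2} a_i`. -/
def qDual {F : Type*} [Field F] (q : F) (a : ℕ → F) (n : ℕ) : F :=
  ∑ i ∈ Finset.range (n + 1), (-1 : F) ^ i * qBinom q n i * q ^ (i.choose 2) * a i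
/-- The q-factorial `[n]_q! = ∏_{j=1}^n [j]_q`. -/
def qFact {F : Type*} [Field F] (q : F) (n : ℕ) : F :=
  ∏ j ∈ Finset.range n, qInt q (j + 1)

/-- `[u,v,w]^n = ∑_{i+j+k=n} ([n]_q!/([i]_q![j]_q![k]_q!)) u^i v^j w^k`. -/
def qBracket3 {F : Type*} [Field F] (q : F) (n : ℕ) (u v w : F) : F :=
  ∑ i ∈ Finset.range (n + 1), ∑ j ∈ Finset.range (n + 1 - i),
    qFact q n / (qFact q i * qFact q j * qFact q (n - i - j)) *
      (u ^ i * v ^ j * w ^ (n - i - j))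

/-- `A_n(x) = ∑_{i=0}^n (-1)^i [n choose i]_q q^{i(i-1)/2} a_i x^{n-i}`. -/
def Apoly {F : Type*} [Field F] (q : F) (a : ℕ → F) (n : ℕ) (x : F) : F :=
  ∑ i ∈ Finset.range (n + 1), (-1 : F) ^ i * qBinom q n i * q ^ (i.choose 2) * a i * x ^ (n - i)

/-- `A*_n(x) = ∑_{i=0}^n (-1)^i [n choose i]_q a*_i x^{n-i}`. -/
def AstarPoly {F : Type*} [Field F] (q : F) (a : ℕ → F) (n : ℕ) (x : F) : F :=
  ∑ i ∈ Finset.range (n + 1), (-1 : F) ^ i * qBinom q n i * qDual q a i * x ^ (n - i)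

/-- `A_n([1,-z,-x]) = ∑_{i=0}^n (-1)^i [n choose i]_q q^{i(i-1)/2} a_i [1,-z,-x]^{n-i}`. -/
def ApolyTri {F : Type*} [Field F] (q : F) (a : ℕ → F) (n : ℕ) (z x : F) : F :=
  ∑ i ∈ Finset.range (n + 1), (-1 : F) ^ i * qBinom q n i * q ^ (i.choose 2) * a i *
    qBracket3 q (n - i) 1 (-z) (-x)

section Helpers
variable {F : Type*} [Field F] {q : F} (hq : ∀ m : ℕ, 0 < m → q ^ m ≠ 1)
include hq

lemma one_sub_qq (j : ℕ) : (1 : F) - q * q ^ j ≠ 0 := by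
  have := hq (j+1) (Nat.succ_pos j)
  rw [sub_ne_zero]
  intro h
  exact this (by rw [pow_succ']; exact h.symm)

lemma qPoch_ne (n : ℕ) : qPoch q q n ≠ 0 :=
  Finset.prod_ne_zero_iff.2 fun j _ => one_sub_qq hq j

omit hq in
lemma qPoch_zero : qPoch q q 0 = 1 := Finset.prod_range_zero _

omit hq in
lemma qPoch_succ (n : ℕ) : qPoch q q (n+1) = qPoch q q n * (1 - q * q ^ n) :=
  Finset.prod_range_succ _ _

omit hq in
lemma qBinom_of_le {i n : ℕ} (h : i ≤ n) :
    qBinom q n i = qPoch q q n / (qPoch q q i * qPoch q q (n - i)) := if_pos h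

omit hq in
lemma qBinom_of_lt {i n : ℕ} (h : n < i) : qBinom q n i = 0 := if_neg (by omega)

lemma qBinom_zero_right (n : ℕ) : qBinom q n 0 = 1 := by
  rw [qBinom_of_le (Nat.zero_le n), qPoch_zero, Nat.sub_zero, one_mul,
    div_self (qPoch_ne hq n)]

lemma qBinom_self (n : ℕ) : qBinom q n n = 1 := by
  rw [qBinom_of_le le_rfl, Nat.sub_self, qPoch_zero, mul_one,
    div_self (qPoch_ne hq n)]

lemma qBinom_mul {i m n : ℕ} (him : i ≤ m) (hmn : m ≤ n) :
    qBinom q n m * qBinom q m i = qBinom q n i * qBinom q (n - i) (m - i) := by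
  rw [qBinom_of_le hmn, qBinom_of_le him, qBinom_of_le (him.trans hmn),
    qBinom_of_le (by omega : m - i ≤ n - i)]
  have h1 : n - i - (m - i) = n - m := by omega
  rw [h1]
  have hP : ∀ m : ℕ, qPoch q q m ≠ 0 := qPoch_ne hq
  field_simp [hP]

lemma qBinom_pascal (n i : ℕ) :
    qBinom q (n+1) (i+1) = qBinom q n (i+1) + q ^ (n-i) * qBinom q n i := by
  rcases le_or_gt (i+1) n with h | h
  · obtain ⟨c, hc⟩ := Nat.exists_eq_add_of_le h
    subst hc
    have e1 : i + 1 + c + 1 - (i + 1) = c + 1 := by omega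
    have e2 : i + 1 + c - (i + 1) = c := by omega
    have e3 : i + 1 + c - i = c + 1 := by omega
    rw [qBinom_of_le (by omega), qBinom_of_le (by omega), qBinom_of_le (by omega),
      e1, e2, e3]
    have h4 : qPoch q q (i+1+c+1) = qPoch q q (i+1+c) * (1 - q * q ^ (i+1+c)) :=
      qPoch_succ _
    have h5 : qPoch q q (i+1) = qPoch q q i * (1 - q * q ^ i) := qPoch_succ _
    have h6 : qPoch q q (c+1) = qPoch q q c * (1 - q * q ^ c) := qPoch_succ _
    rw [h4, h5, h6]
    have hP : ∀ m : ℕ, qPoch q q m ≠ 0 := qPoch_ne hq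
    have hi := one_sub_qq hq i
    have hc' := one_sub_qq hq c
    field_simp [hP]
    ring
  · rcases Nat.lt_or_ge n i with h2 | h2
    · rw [qBinom_of_lt (by omega), qBinom_of_lt (by omega), qBinom_of_lt h2,
        mul_zero, add_zero]
    · have : i = n := by omega
      subst this
      rw [qBinom_self hq, qBinom_of_lt (by omega), qBinom_self hq, zero_add,
        Nat.sub_self, pow_zero, one_mul]

lemma qInt_ne {n : ℕ} (hn : 0 < n) : qInt q n ≠ 0 := by
  have h1 : (1 : F) - q ^ n ≠ 0 := by
    rw [sub_ne_zero]; exact fun h => hq n hn h.symm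
  have h2 : (1 : F) - q ≠ 0 := by
    rw [sub_ne_zero]; exact fun h => hq 1 one_pos (by rw [pow_one]; exact h.symm)
  exact div_ne_zero h1 h2

lemma qFact_ne (n : ℕ) : qFact q n ≠ 0 :=
  Finset.prod_ne_zero_iff.2 fun j _ => qInt_ne hq (Nat.succ_pos j)

lemma qPoch_eq_qFact (n : ℕ) : qPoch q q n = (1 - q) ^ n * qFact q n := by
  have h2 : (1 : F) - q ≠ 0 := by
    rw [sub_ne_zero]; exact fun h => hq 1 one_pos (by rw [pow_one]; exact h.symm)
  rw [qFact]
  have : ((1:F) - q) ^ n = ∏ _j ∈ Finset.range n, (1 - q) := by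
    rw [Finset.prod_const, Finset.card_range]
  rw [this, ← Finset.prod_mul_distrib]
  exact Finset.prod_congr rfl fun j _ => by
    rw [qInt, mul_div_cancel₀ _ h2, pow_succ']

lemma qBinom_eq_qFact {i n : ℕ} (h : i ≤ n) :
    qBinom q n i = qFact q n / (qFact q i * qFact q (n - i)) := by
  have h2 : (1 : F) - q ≠ 0 := by
    rw [sub_ne_zero]; exact fun h => hq 1 one_pos (by rw [pow_one]; exact h.symm)
  rw [qBinom_of_le h, qPoch_eq_qFact hq, qPoch_eq_qFact hq, qPoch_eq_qFact hq]
  have hP : ∀ m : ℕ, qFact q m ≠ 0 := qFact_ne hq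
  have hp : ((1:F)-q)^i * (1-q)^(n-i) = (1-q)^n := by
    rw [← pow_add]; congr 1; omega
  field_simp [hP]
  rw [← hp]

lemma qMultinom {i j n : ℕ} (h : i + j ≤ n) :
    qFact q n / (qFact q i * qFact q j * qFact q (n - i - j)) =
      qBinom q n i * qBinom q (n - i) j := by
  rw [qBinom_eq_qFact hq (by omega), qBinom_eq_qFact hq (by omega : j ≤ n - i)]
  have hP : ∀ m : ℕ, qFact q m ≠ 0 := qFact_ne hq
  have e : n - i - (j + (n - i - j)) = 0 := by omega
  have e2 : n - i - j = n - i - j := rfl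
  field_simp [hP]

end Helpers

section Sums
variable {F : Type*} [Field F] {q : F} (hq : ∀ m : ℕ, 0 < m → q ^ m ≠ 1)

lemma sum_ext_zero {M : Type*} [AddCommMonoid M] (f : ℕ → M) {a b : ℕ} (h : a ≤ b)
    (h0 : ∀ m, a < m → f m = 0) :
    ∑ m ∈ Finset.range (b + 1), f m = ∑ m ∈ Finset.range (a + 1), f m := by
  refine (Finset.sum_subset (Finset.range_subset_range.2 (by omega)) ?_).symm
  intro x hx hx'
  exact h0 x (by simp only [Finset.mem_range] at hx hx' ⊢; omega)

lemma sum_shift {M : Type*} [AddCommMonoid M] (f : ℕ → M) {i N : ℕ} (hi : i ≤ N)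
    (h0 : ∀ m, m < i → f m = 0) :
    ∑ m ∈ Finset.range (N + 1), f m = ∑ m ∈ Finset.range (N + 1 - i), f (i + m) := by
  have h2 : ∑ m ∈ Finset.Ico i (N + 1), f m = ∑ m ∈ Finset.range (N + 1 - i), f (i + m) :=
    Finset.sum_Ico_eq_sum_range f i (N + 1)
  rw [← h2, Finset.range_eq_Ico,
    ← Finset.sum_Ico_consecutive f (Nat.zero_le i) (by omega : i ≤ N + 1),
    Finset.sum_eq_zero (fun m hm => h0 m (Finset.mem_Ico.1 hm).2), zero_add]

lemma neg_one_pow_sub {a b : ℕ} (h : b ≤ a) : ((-1 : F)) ^ (a - b) = (-1) ^ (a + b) := by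
  have : a + b = (a - b) + 2 * b := by omega
  rw [this, pow_add, pow_mul, neg_one_sq, one_pow, mul_one]

include hq

/-- Lemma B: the alternating q-binomial sum. -/
lemma sumB (l : ℕ) : ∀ (k i : ℕ),
    ∑ j ∈ Finset.range (k + 1),
      (-1 : F) ^ j * qBinom q k j * qBinom q (l + j) i * q ^ ((k - j).choose 2) =
    if k ≤ i then (-1 : F) ^ k * q ^ (k * (k + l - i)) * qBinom q l (i - k) else 0 := by
  intro k
  induction k with
  | zero =>
    intro i
    simp [qBinom_zero_right hq]
  | succ k ih =>
    intro i
    have key : ∑ j ∈ Finset.range (k + 1 + 1),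
        (-1 : F) ^ j * qBinom q (k+1) j * qBinom q (l + j) i * q ^ ((k + 1 - j).choose 2) =
        ∑ j ∈ Finset.range (k + 1), (-1 : F) ^ j * qBinom q k j * q ^ ((k - j).choose 2) *
          q ^ (k - j) * (qBinom q (l + j) i - qBinom q (l + j + 1) i) := by
      rw [Finset.sum_range_succ']
      have e0 : (-1 : F) ^ 0 * qBinom q (k+1) 0 * qBinom q (l + 0) i *
          q ^ ((k + 1 - 0).choose 2) = qBinom q l i * q ^ ((k+1).choose 2) := by
        rw [qBinom_zero_right hq]
        norm_num
      rw [e0]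
      have step : ∀ j ∈ Finset.range (k+1),
          (-1 : F) ^ (j+1) * qBinom q (k+1) (j+1) * qBinom q (l + (j+1)) i *
            q ^ ((k + 1 - (j+1)).choose 2) =
          (-1) ^ (j+1) * qBinom q k (j+1) * qBinom q (l + j + 1) i * q ^ ((k - j).choose 2)
          + (-1) ^ (j+1) * q ^ (k - j) * qBinom q k j * qBinom q (l + j + 1) i *
            q ^ ((k - j).choose 2) := by
        intro j hj
        have : k + 1 - (j + 1) = k - j := by omega
        rw [this, qBinom_pascal hq k j]
        have : l + (j + 1) = l + j + 1 := by omega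
        rw [this]
        ring
      rw [Finset.sum_congr rfl step, Finset.sum_add_distrib]
      -- first piece: reindex
      have first : ∑ j ∈ Finset.range (k+1),
          (-1 : F) ^ (j+1) * qBinom q k (j+1) * qBinom q (l + j + 1) i *
            q ^ ((k - j).choose 2) =
          (∑ j ∈ Finset.range (k+1+1), (-1 : F) ^ j * qBinom q k j * qBinom q (l + j) i *
            q ^ ((k + 1 - j).choose 2))
          - qBinom q l i * q ^ ((k+1).choose 2) := by
        rw [Finset.sum_range_succ' (fun j => (-1 : F) ^ j * qBinom q k j *
          qBinom q (l + j) i * q ^ ((k + 1 - j).choose 2)) (k+1)]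
        have : ∀ j ∈ Finset.range (k+1),
            (-1 : F) ^ (j+1) * qBinom q k (j+1) * qBinom q (l + (j+1)) i *
              q ^ ((k + 1 - (j+1)).choose 2) =
            (-1 : F) ^ (j+1) * qBinom q k (j+1) * qBinom q (l + j + 1) i *
              q ^ ((k - j).choose 2) := by
          intro j hj
          have e : k + 1 - (j + 1) = k - j := by omega
          have e2 : l + (j + 1) = l + j + 1 := by omega
          rw [e, e2]
        rw [Finset.sum_congr rfl this]
        simp [qBinom_zero_right hq]
      rw [first]
      have second : ∑ j ∈ Finset.range (k+1+1), (-1 : F) ^ j * qBinom q k j *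
          qBinom q (l + j) i * q ^ ((k + 1 - j).choose 2) =
          ∑ j ∈ Finset.range (k+1), (-1 : F) ^ j * qBinom q k j * qBinom q (l + j) i *
            q ^ ((k - j).choose 2) * q ^ (k - j) := by
        rw [Finset.sum_range_succ]
        rw [qBinom_of_lt (by omega : k < k + 1), mul_zero, zero_mul, zero_mul, add_zero]
        refine Finset.sum_congr rfl fun j hj => ?_
        have hj' : j ≤ k := by simp only [Finset.mem_range] at hj; omega
        have e : (k + 1 - j).choose 2 = (k - j).choose 2 + (k - j) := by
          have h1 : k + 1 - j = (k - j) + 1 := by omega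
          rw [h1]
          simp [Nat.choose_succ_succ, Nat.choose_one_right]
          omega
        rw [e, pow_add]
        ring
      rw [second]
      have comb : ∑ j ∈ Finset.range (k+1), ((-1 : F) ^ j * qBinom q k j *
            qBinom q (l + j) i * q ^ ((k - j).choose 2) * q ^ (k - j)) +
          ∑ j ∈ Finset.range (k+1), ((-1 : F) ^ (j+1) * q ^ (k - j) * qBinom q k j *
            qBinom q (l + j + 1) i * q ^ ((k - j).choose 2)) =
          ∑ j ∈ Finset.range (k+1), (-1 : F) ^ j * qBinom q k j * q ^ ((k - j).choose 2) *
            q ^ (k - j) * (qBinom q (l + j) i - qBinom q (l + j + 1) i) := by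
        rw [← Finset.sum_add_distrib]
        exact Finset.sum_congr rfl fun j hj => by ring
      linear_combination comb
    rw [key]
    rcases i with _ | i'
    · have hz : ∀ j ∈ Finset.range (k+1),
          (-1 : F) ^ j * qBinom q k j * q ^ ((k - j).choose 2) * q ^ (k - j) *
            (qBinom q (l + j) 0 - qBinom q (l + j + 1) 0) = 0 := by
        intro j _
        rw [qBinom_zero_right hq, qBinom_zero_right hq, sub_self, mul_zero]
      rw [Finset.sum_eq_zero hz, if_neg (by omega)]
    · have diff : ∀ j ∈ Finset.range (k+1),
          (-1 : F) ^ j * qBinom q k j * q ^ ((k - j).choose 2) * q ^ (k - j) *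
            (qBinom q (l + j) (i'+1) - qBinom q (l + j + 1) (i'+1)) =
          -q ^ (k + l - i') *
            ((-1 : F) ^ j * qBinom q k j * qBinom q (l + j) i' * q ^ ((k - j).choose 2)) := by
        intro j hj
        have hj' : j ≤ k := by simp only [Finset.mem_range] at hj; omega
        rw [qBinom_pascal hq (l + j) i']
        rw [show qBinom q (l+j) (i'+1) -
            (qBinom q (l+j) (i'+1) + q ^ (l + j - i') * qBinom q (l+j) i') =
            -(q ^ (l + j - i') * qBinom q (l+j) i') by ring]
        rcases le_or_gt i' (l + j) with hle | hlt
        · have e : q ^ (k - j) * q ^ (l + j - i') = q ^ (k + l - i') := by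
            rw [← pow_add]; congr 1; omega
          calc (-1 : F) ^ j * qBinom q k j * q ^ ((k - j).choose 2) * q ^ (k - j) *
              -(q ^ (l + j - i') * qBinom q (l+j) i')
              = -(q ^ (k - j) * q ^ (l + j - i')) *
                ((-1 : F) ^ j * qBinom q k j * qBinom q (l + j) i' *
                  q ^ ((k - j).choose 2)) := by ring
            _ = _ := by rw [e]
        · rw [qBinom_of_lt hlt]
          ring
      rw [Finset.sum_congr rfl diff, ← Finset.mul_sum, ih i']
      rcases le_or_gt k i' with hki | hki
      · rw [if_pos hki, if_pos (by omega : k + 1 ≤ i' + 1)]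
        have e1 : k + 1 + l - (i' + 1) = k + l - i' := by omega
        have e2 : i' + 1 - (k + 1) = i' - k := by omega
        have e3 : (k+1) * (k + l - i') = (k + l - i') + k * (k + l - i') := by ring
        rw [e1, e2, e3, pow_add]
        ring
      · rw [if_neg (by omega), if_neg (by omega), mul_zero]

end Sums

section LemC
variable {F : Type*} [Field F] {q : F} (hq : ∀ m : ℕ, 0 < m → q ^ m ≠ 1)
include hq

lemma B3_eq (z x : F) (n : ℕ) :
    qBracket3 q n 1 (-z) (-x) =
      ∑ p ∈ Finset.range (n + 1), ∑ t ∈ Finset.range (n + 1 - p),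
        (-1 : F) ^ (n - p) * qBinom q n p * qBinom q (n - p) t * (z ^ t * x ^ (n - p - t)) := by
  unfold qBracket3
  refine Finset.sum_congr rfl fun p hp => Finset.sum_congr rfl fun t ht => ?_
  have hp' : p ≤ n := by simp only [Finset.mem_range] at hp; omega
  have ht' : p + t ≤ n := by simp only [Finset.mem_range] at ht; omega
  rw [qMultinom hq ht', one_pow, neg_pow z, neg_pow x]
  have h3 : (-1 : F) ^ t * (-1 : F) ^ (n - p - t) = (-1) ^ (n - p) := by
    rw [← pow_add]; congr 1; omega
  calc qBinom q n p * qBinom q (n - p) t *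
        (1 * ((-1 : F) ^ t * z ^ t) * ((-1 : F) ^ (n - p - t) * x ^ (n - p - t)))
      = ((-1 : F) ^ t * (-1 : F) ^ (n - p - t)) * qBinom q n p * qBinom q (n - p) t *
        (z ^ t * x ^ (n - p - t)) := by ring
    _ = _ := by rw [h3]

lemma lemA' (z x : F) {l i : ℕ} (hi : i ≤ l) :
    (-1 : F) ^ l * ∑ m ∈ Finset.range (l + 1), ∑ j ∈ Finset.range (l + 1),
      (-1 : F) ^ m * qBinom q l j * qBinom q j m * qBinom q m i * x ^ (l - j) * z ^ (j - m) =
    qBinom q l i * qBracket3 q (l - i) 1 (-z) (-x) := by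
  rw [B3_eq hq]
  -- shift the m-sum by i
  have hm0 : ∀ m, m < i →
      (∑ j ∈ Finset.range (l + 1),
        (-1 : F) ^ m * qBinom q l j * qBinom q j m * qBinom q m i * x ^ (l - j) * z ^ (j - m)) = 0 := by
    intro m hm
    exact Finset.sum_eq_zero fun j _ => by
      rw [qBinom_of_lt (by omega : m < i)]; ring
  rw [sum_shift _ hi hm0]
  -- shift each inner j-sum by i + p
  have inner : ∀ p ∈ Finset.range (l + 1 - i),
      (∑ j ∈ Finset.range (l + 1),
        (-1 : F) ^ (i + p) * qBinom q l j * qBinom q j (i + p) * qBinom q (i + p) i *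
          x ^ (l - j) * z ^ (j - (i + p))) =
      ∑ t ∈ Finset.range (l + 1 - (i + p)),
        (-1 : F) ^ (i + p) * qBinom q l (i + p + t) * qBinom q (i + p + t) (i + p) *
          qBinom q (i + p) i * x ^ (l - (i + p + t)) * z ^ ((i + p + t) - (i + p)) := by
    intro p hp
    have hp' : i + p ≤ l := by simp only [Finset.mem_range] at hp; omega
    have hj0 : ∀ j, j < i + p →
        (-1 : F) ^ (i + p) * qBinom q l j * qBinom q j (i + p) * qBinom q (i + p) i *
          x ^ (l - j) * z ^ (j - (i + p)) = 0 := by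
      intro j hj
      rw [qBinom_of_lt (by omega : j < i + p)]; ring
    exact sum_shift _ hp' hj0
  rw [Finset.sum_congr rfl inner, Finset.mul_sum, Finset.mul_sum]
  have hrange : l + 1 - i = l - i + 1 := by omega
  rw [hrange]
  refine Finset.sum_congr rfl fun p hp => ?_
  have hp' : p ≤ l - i := by simp only [Finset.mem_range] at hp; omega
  have hr2 : l + 1 - (i + p) = l - i + 1 - p := by omega
  rw [hr2, Finset.mul_sum, Finset.mul_sum]
  refine Finset.sum_congr rfl fun t ht => ?_
  have ht' : t ≤ l - i - p := by simp only [Finset.mem_range] at ht; omega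
  -- rewrite the binomial products
  have e1 : qBinom q l (i + p + t) * qBinom q (i + p + t) (i + p) =
      qBinom q l (i + p) * qBinom q (l - (i + p)) ((i + p + t) - (i + p)) :=
    qBinom_mul hq (by omega) (by omega)
  have e2 : qBinom q l (i + p) * qBinom q (i + p) i =
      qBinom q l i * qBinom q (l - i) ((i + p) - i) :=
    qBinom_mul hq (by omega) (by omega)
  have n1 : (i + p + t) - (i + p) = t := by omega
  have n2 : (i + p) - i = p := by omega
  have n3 : l - (i + p) = l - i - p := by omega
  rw [n1, n3] at e1
  rw [n2] at e2
  have n4 : l - (i + p + t) = l - i - p - t := by omega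
  have n5 : (i + p + t) - (i + p) = t := by omega
  rw [n4, n5]
  have sgn : (-1 : F) ^ l * (-1 : F) ^ (i + p) = (-1) ^ (l - i - p) := by
    have : l - i - p = l - (i + p) := by omega
    rw [this, neg_one_pow_sub (by omega : i + p ≤ l), ← pow_add]
  calc (-1 : F) ^ l * ((-1 : F) ^ (i + p) * qBinom q l (i + p + t) *
        qBinom q (i + p + t) (i + p) * qBinom q (i + p) i * x ^ (l - i - p - t) * z ^ t)
      = ((-1 : F) ^ l * (-1 : F) ^ (i + p)) *
        (qBinom q l (i + p + t) * qBinom q (i + p + t) (i + p)) * qBinom q (i + p) i *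
        x ^ (l - i - p - t) * z ^ t := by ring
    _ = (-1 : F) ^ (l - i - p) * (qBinom q l (i + p) * qBinom q (l - i - p) t) *
        qBinom q (i + p) i * x ^ (l - i - p - t) * z ^ t := by rw [sgn, e1]
    _ = (-1 : F) ^ (l - i - p) * (qBinom q l (i + p) * qBinom q (i + p) i) *
        qBinom q (l - i - p) t * x ^ (l - i - p - t) * z ^ t := by ring
    _ = (-1 : F) ^ (l - i - p) * (qBinom q l i * qBinom q (l - i) p) *
        qBinom q (l - i - p) t * x ^ (l - i - p - t) * z ^ t := by rw [e2]
    _ = _ := by ring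

end LemC

section LemA
variable {F : Type*} [Field F] {q : F} (hq : ∀ m : ℕ, 0 < m → q ^ m ≠ 1)
include hq

lemma lemA (a : ℕ → F) (z x : F) (l : ℕ) :
    ApolyTri q a l z x =
      (-1 : F) ^ l * ∑ j ∈ Finset.range (l + 1),
        qBinom q l j * x ^ (l - j) * AstarPoly q a j z := by
  set T : ℕ → ℕ → ℕ → F := fun j m i =>
    qBinom q l j * x ^ (l - j) *
      ((-1 : F) ^ m * qBinom q j m * z ^ (j - m) *
        ((-1 : F) ^ i * qBinom q m i * q ^ (i.choose 2) * a i)) with hT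
  have step1 : ∀ j ∈ Finset.range (l + 1),
      qBinom q l j * x ^ (l - j) * AstarPoly q a j z =
      ∑ m ∈ Finset.range (l + 1), ∑ i ∈ Finset.range (l + 1), T j m i := by
    intro j hj
    have hj' : j ≤ l := by simp only [Finset.mem_range] at hj; omega
    have ext1 : AstarPoly q a j z =
        ∑ m ∈ Finset.range (l + 1),
          (-1 : F) ^ m * qBinom q j m * qDual q a m * z ^ (j - m) := by
      unfold AstarPoly
      exact (sum_ext_zero _ hj' fun m hm => by
        rw [qBinom_of_lt (by omega : j < m)]; ring).symm
    rw [ext1, Finset.mul_sum]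
    refine Finset.sum_congr rfl fun m hm => ?_
    have hm' : m ≤ l := by simp only [Finset.mem_range] at hm; omega
    have ext2 : qDual q a m =
        ∑ i ∈ Finset.range (l + 1),
          (-1 : F) ^ i * qBinom q m i * q ^ (i.choose 2) * a i := by
      unfold qDual
      exact (sum_ext_zero _ hm' fun i hi => by
        rw [qBinom_of_lt (by omega : m < i)]; ring).symm
    rw [ext2]
    simp only [hT, Finset.mul_sum, Finset.sum_mul]
    exact Finset.sum_congr rfl fun i _ => by ring
  rw [Finset.sum_congr rfl step1]
  have reord : ∑ j ∈ Finset.range (l + 1), ∑ m ∈ Finset.range (l + 1),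
      ∑ i ∈ Finset.range (l + 1), T j m i =
      ∑ i ∈ Finset.range (l + 1), ∑ m ∈ Finset.range (l + 1),
      ∑ j ∈ Finset.range (l + 1), T j m i := by
    calc ∑ j ∈ Finset.range (l + 1), ∑ m ∈ Finset.range (l + 1),
        ∑ i ∈ Finset.range (l + 1), T j m i
        = ∑ j ∈ Finset.range (l + 1), ∑ i ∈ Finset.range (l + 1),
          ∑ m ∈ Finset.range (l + 1), T j m i :=
          Finset.sum_congr rfl fun j _ => Finset.sum_comm
      _ = ∑ i ∈ Finset.range (l + 1), ∑ j ∈ Finset.range (l + 1),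
          ∑ m ∈ Finset.range (l + 1), T j m i := Finset.sum_comm
      _ = ∑ i ∈ Finset.range (l + 1), ∑ m ∈ Finset.range (l + 1),
          ∑ j ∈ Finset.range (l + 1), T j m i :=
          Finset.sum_congr rfl fun i _ => Finset.sum_comm
  rw [reord]
  unfold ApolyTri
  rw [Finset.mul_sum]
  refine Finset.sum_congr rfl fun i hi => ?_
  have hi' : i ≤ l := by simp only [Finset.mem_range] at hi; omega
  have factor : ∑ m ∈ Finset.range (l + 1), ∑ j ∈ Finset.range (l + 1), T j m i =
      ((-1 : F) ^ i * q ^ (i.choose 2) * a i) *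
      ∑ m ∈ Finset.range (l + 1), ∑ j ∈ Finset.range (l + 1),
        (-1 : F) ^ m * qBinom q l j * qBinom q j m * qBinom q m i *
          x ^ (l - j) * z ^ (j - m) := by
    rw [Finset.mul_sum]
    refine Finset.sum_congr rfl fun m _ => ?_
    rw [Finset.mul_sum]
    refine Finset.sum_congr rfl fun j _ => ?_
    rw [hT]; simp only; ring
  rw [factor]
  symm
  calc (-1 : F) ^ l * (((-1 : F) ^ i * q ^ (i.choose 2) * a i) *
        ∑ m ∈ Finset.range (l + 1), ∑ j ∈ Finset.range (l + 1),
          (-1 : F) ^ m * qBinom q l j * qBinom q j m * qBinom q m i *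
            x ^ (l - j) * z ^ (j - m))
      = ((-1 : F) ^ i * q ^ (i.choose 2) * a i) *
        ((-1 : F) ^ l * ∑ m ∈ Finset.range (l + 1), ∑ j ∈ Finset.range (l + 1),
          (-1 : F) ^ m * qBinom q l j * qBinom q j m * qBinom q m i *
            x ^ (l - j) * z ^ (j - m)) := by ring
    _ = ((-1 : F) ^ i * q ^ (i.choose 2) * a i) *
        (qBinom q l i * qBracket3 q (l - i) 1 (-z) (-x)) := by rw [lemA' hq z x hi']
    _ = (-1 : F) ^ i * qBinom q l i * q ^ (i.choose 2) * a i *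
        qBracket3 q (l - i) 1 (-z) (-x) := by ring

end LemA

theorem stmt4 {F : Type*} [Field F] (q : F) (hq0 : q ≠ 0)
    (hq : ∀ m : ℕ, 0 < m → q ^ m ≠ 1) (a : ℕ → F) (k l : ℕ) (x z : F) :
    (-1 : F) ^ l * ∑ j ∈ Finset.range (l + 1), qBinom q l j * x ^ (l - j) *
        AstarPoly q a (k + j) z * q ^ (k * (l - j)) =
    (-1 : F) ^ k * ∑ j ∈ Finset.range (k + 1), qBinom q k j * x ^ (k - j) *
        ApolyTri q a (l + j) z x * q ^ ((k - j).choose 2) := by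
  symm
  set U : ℕ → ℕ → F := fun j i =>
    (-1 : F) ^ (l + j) * qBinom q k j * x ^ (k - j) * q ^ ((k - j).choose 2) *
      qBinom q (l + j) i * x ^ (l + j - i) * AstarPoly q a i z with hU
  have step1 : ∀ j ∈ Finset.range (k + 1),
      qBinom q k j * x ^ (k - j) * ApolyTri q a (l + j) z x * q ^ ((k - j).choose 2) =
      ∑ i ∈ Finset.range (k + l + 1), U j i := by
    intro j hj
    have hj' : j ≤ k := by simp only [Finset.mem_range] at hj; omega
    rw [lemA hq a z x (l + j)]
    have ext : ∑ i ∈ Finset.range (k + l + 1),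
        qBinom q (l + j) i * x ^ (l + j - i) * AstarPoly q a i z =
        ∑ i ∈ Finset.range (l + j + 1),
          qBinom q (l + j) i * x ^ (l + j - i) * AstarPoly q a i z := by
      refine sum_ext_zero _ (by omega : l + j ≤ k + l) fun i hi => ?_
      rw [qBinom_of_lt (by omega : l + j < i)]; ring
    rw [← ext]
    simp only [hU, Finset.mul_sum, Finset.sum_mul]
    exact Finset.sum_congr rfl fun i _ => by ring
  rw [Finset.sum_congr rfl step1, Finset.sum_comm]
  have step3 : ∀ i ∈ Finset.range (k + l + 1),
      ∑ j ∈ Finset.range (k + 1), U j i =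
      ((-1 : F) ^ l * AstarPoly q a i z * x ^ (k + l - i)) *
        (if k ≤ i then (-1 : F) ^ k * q ^ (k * (k + l - i)) * qBinom q l (i - k) else 0) := by
    intro i hi
    rw [← sumB hq l k i, Finset.mul_sum]
    refine Finset.sum_congr rfl fun j hj => ?_
    have hj' : j ≤ k := by simp only [Finset.mem_range] at hj; omega
    rw [hU]
    simp only
    have sgn : (-1 : F) ^ (l + j) = (-1) ^ l * (-1) ^ j := pow_add _ _ _
    rcases le_or_gt i (l + j) with hle | hlt
    · have hx : x ^ (k - j) * x ^ (l + j - i) = x ^ (k + l - i) := by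
        rw [← pow_add]; congr 1; omega
      calc (-1 : F) ^ (l + j) * qBinom q k j * x ^ (k - j) * q ^ ((k - j).choose 2) *
            qBinom q (l + j) i * x ^ (l + j - i) * AstarPoly q a i z
          = ((-1 : F) ^ (l + j)) * (x ^ (k - j) * x ^ (l + j - i)) * qBinom q k j *
            q ^ ((k - j).choose 2) * qBinom q (l + j) i * AstarPoly q a i z := by ring
        _ = ((-1 : F) ^ l * (-1) ^ j) * x ^ (k + l - i) * qBinom q k j *
            q ^ ((k - j).choose 2) * qBinom q (l + j) i * AstarPoly q a i z := by
            rw [sgn, hx]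
        _ = _ := by ring
    · rw [qBinom_of_lt hlt]
      ring
  rw [Finset.sum_congr rfl step3]
  set V : ℕ → F := fun i =>
    ((-1 : F) ^ l * AstarPoly q a i z * x ^ (k + l - i)) *
      (if k ≤ i then (-1 : F) ^ k * q ^ (k * (k + l - i)) * qBinom q l (i - k) else 0)
    with hV
  have hV0 : ∀ m, m < k → V m = 0 := by
    intro m hm
    rw [hV]
    simp only
    rw [if_neg (by omega), mul_zero]
  rw [sum_shift V (by omega : k ≤ k + l) hV0]
  have hrange : k + l + 1 - k = l + 1 := by omega
  rw [hrange, Finset.mul_sum, Finset.mul_sum]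
  refine Finset.sum_congr rfl fun j hj => ?_
  have hj' : j ≤ l := by simp only [Finset.mem_range] at hj; omega
  rw [hV]
  simp only
  rw [if_pos (by omega : k ≤ k + j)]
  have e1 : k + l - (k + j) = l - j := by omega
  have e2 : k + j - k = j := by omega
  rw [e1, e2]
  have sq : (-1 : F) ^ k * (-1 : F) ^ k = 1 := by
    rw [← pow_add, ← two_mul, pow_mul]; norm_num
  calc (-1 : F) ^ k * ((-1 : F) ^ l * AstarPoly q a (k + j) z * x ^ (l - j) *
        ((-1 : F) ^ k * q ^ (k * (l - j)) * qBinom q l j))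
      = ((-1 : F) ^ k * (-1 : F) ^ k) * ((-1 : F) ^ l *
        (qBinom q l j * x ^ (l - j) * AstarPoly q a (k + j) z * q ^ (k * (l - j)))) := by ring
    _ = _ := by rw [sq, one_mul]
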